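/- (Display (4.2)) For every integer n ≥ 1 and every s ∈ [0, t_n], one has log(n+1) + 1/(2(n+2)) − (s+1) ≤ t_n − s − γ ≤ log(m(t_n − s) + 2) − 1 + 1/(2(m(t_n − s) + 1)), where γ is the Euler–Mascheroni constant. -/

import Mathlib

noncomputable section

/-- The interpolation times `t_k = ∑_{j=1}^k 1/(j+1)` (so `t_0 = 0`). -/
def tSeq (k : ℕ) : ℝ := ∑ j ∈ Finset.range k, (1 : ℝ) / (j + 2)

/-- `m(s) = sup {k ∈ ℕ₀ : t_k ≤ s}`. -/
def mFun (s : ℝ) : ℕ := sSup {k : ℕ | tSeq k ≤ s}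

/-- `ψ_e(s) = m(s) + 2`. -/
def psiE (s : ℝ) : ℝ := (mFun s : ℝ) + 2

open Real Filter Finset Topology

lemma log_ratio_eq {K : ℝ} (hK : 1 ≤ K) :
    Real.log (K+1) - Real.log K =
      Real.log (1 + 1/(2*K+1)) - Real.log (1 - 1/(2*K+1)) := by
  have h0 : (0:ℝ) < K := by linarith
  have h1 : (0:ℝ) < 2*K+1 := by linarith
  have e1 : 1 + 1/(2*K+1) = (2*(K+1))/(2*K+1) := by
    field_simp
    ring
  have e2 : 1 - 1/(2*K+1) = (2*K)/(2*K+1) := by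
    field_simp
    ring
  rw [e1, e2, Real.log_div (by positivity) (by positivity),
    Real.log_div (by positivity) (by positivity),
    Real.log_mul (by norm_num) (by positivity), Real.log_mul (by norm_num) h0.ne']
  ring

lemma series_bounds {u : ℝ} (h0 : 0 < u) (h1 : u ≤ 1/3) :
    (u - u^2/2 + u^3/3 - u^4/(1-u) ≤ Real.log (1+u) ∧
      Real.log (1+u) ≤ u - u^2/2 + u^3/3 + u^4/(1-u)) ∧
    (-u - u^2/2 - u^3/3 - u^4/(1-u) ≤ Real.log (1-u) ∧
      Real.log (1-u) ≤ -u - u^2/2 - u^3/3 + u^4/(1-u)) := by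
  have habs : |u| < 1 := by rw [abs_of_pos h0]; linarith
  have habs' : |(-u)| < 1 := by rwa [abs_neg]
  have h₁ := abs_log_sub_add_sum_range_le habs 3
  have h₂ := abs_log_sub_add_sum_range_le habs' 3
  rw [abs_of_pos h0] at h₁
  rw [abs_neg, abs_of_pos h0] at h₂
  simp [Finset.sum_range_succ] at h₁ h₂
  rw [abs_le] at h₁ h₂
  constructor
  · constructor <;> linarith [h₂.1, h₂.2]
  · constructor <;> linarith [h₁.1, h₁.2]

lemma log_step_lb {K : ℝ} (hK : 1 ≤ K) :
    1/(K+1) + 1/(2*(K+1)) - 1/(2*(K+2)) ≤ Real.log (K+1) - Real.log K := by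
  have h0 : (0:ℝ) < K := by linarith
  have h1 : (0:ℝ) < 2*K+1 := by linarith
  have hu0 : 0 < 1/(2*K+1) := by positivity
  have hu3 : 1/(2*K+1) ≤ 1/3 := by
    rw [div_le_div_iff₀ h1 (by norm_num)]; linarith
  obtain ⟨⟨hp, -⟩, ⟨-, hm⟩⟩ := series_bounds hu0 hu3
  have h1mu : 1 - 1/(2*K+1) = 2*K/(2*K+1) := by
    field_simp
    ring
  rw [log_ratio_eq hK, h1mu]
  rw [h1mu] at hp hm
  have key : 1/(K+1) + 1/(2*(K+1)) - 1/(2*(K+2)) ≤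
      (1/(2*K+1) - (1/(2*K+1))^2/2 + (1/(2*K+1))^3/3 - (1/(2*K+1))^4/(2*K/(2*K+1)))
      - (-(1/(2*K+1)) - (1/(2*K+1))^2/2 - (1/(2*K+1))^3/3 + (1/(2*K+1))^4/(2*K/(2*K+1))) := by
    have hK1 : (0:ℝ) ≤ K - 1 := by linarith
    rw [← sub_nonneg]
    have comb : (1/(2*K+1) - (1/(2*K+1))^2/2 + (1/(2*K+1))^3/3 - (1/(2*K+1))^4/(2*K/(2*K+1)))
        - (-(1/(2*K+1)) - (1/(2*K+1))^2/2 - (1/(2*K+1))^3/3 + (1/(2*K+1))^4/(2*K/(2*K+1)))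
        - (1/(K+1) + 1/(2*(K+1)) - 1/(2*(K+2)))
        = (-16 - (532/3)*K - (2276/3)*K^2 - (3952/3)*K^3 + (2000/3)*K^4 + (22144/3)*K^5
            + (44096/3)*K^6 + (44288/3)*K^7 + (23296/3)*K^8 + (5120/3)*K^9)
          / (16*K + 296*K^2 + 2464*K^3 + 12168*K^4 + 39552*K^5 + 88704*K^6 + 139776*K^7
            + 154368*K^8 + 116736*K^9 + 57344*K^10 + 16384*K^11 + 2048*K^12) := by
      have hd : (16*K + 296*K^2 + 2464*K^3 + 12168*K^4 + 39552*K^5 + 88704*K^6 + 139776*K^7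
          + 154368*K^8 + 116736*K^9 + 57344*K^10 + 16384*K^11 + 2048*K^12) ≠ 0 := by positivity
      field_simp
      ring
    rw [comb]
    apply div_nonneg _ (by positivity)
    nlinarith [pow_nonneg hK1 2, pow_nonneg hK1 3, pow_nonneg hK1 4, pow_nonneg hK1 5,
      pow_nonneg hK1 6, pow_nonneg hK1 7, pow_nonneg hK1 8, pow_nonneg hK1 9]

  linarith

lemma log_step_ub {K : ℝ} (hK : 1 ≤ K) :
    Real.log (K+1) - Real.log K ≤ 1/(K+1) + 1/(2*K) - 1/(2*(K+1)) := by
  have h0 : (0:ℝ) < K := by linarith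
  have h1 : (0:ℝ) < 2*K+1 := by linarith
  have hu0 : 0 < 1/(2*K+1) := by positivity
  have hu3 : 1/(2*K+1) ≤ 1/3 := by
    rw [div_le_div_iff₀ h1 (by norm_num)]; linarith
  obtain ⟨⟨-, hp⟩, ⟨hm, -⟩⟩ := series_bounds hu0 hu3
  have h1mu : 1 - 1/(2*K+1) = 2*K/(2*K+1) := by
    field_simp
    ring
  rw [log_ratio_eq hK, h1mu]
  rw [h1mu] at hp hm
  have key : (1/(2*K+1) - (1/(2*K+1))^2/2 + (1/(2*K+1))^3/3 + (1/(2*K+1))^4/(2*K/(2*K+1)))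
      - (-(1/(2*K+1)) - (1/(2*K+1))^2/2 - (1/(2*K+1))^3/3 - (1/(2*K+1))^4/(2*K/(2*K+1)))
      ≤ 1/(K+1) + 1/(2*K) - 1/(2*(K+1)) := by
    have hK1 : (0:ℝ) ≤ K - 1 := by linarith
    rw [← sub_nonneg]
    have comb : 1/(K+1) + 1/(2*K) - 1/(2*(K+1))
        - ((1/(2*K+1) - (1/(2*K+1))^2/2 + (1/(2*K+1))^3/3 + (1/(2*K+1))^4/(2*K/(2*K+1)))
          - (-(1/(2*K+1)) - (1/(2*K+1))^2/2 - (1/(2*K+1))^3/3 - (1/(2*K+1))^4/(2*K/(2*K+1))))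
        = (-4*K - (124/3)*K^2 - 160*K^3 - (688/3)*K^4 + (640/3)*K^5 + (3776/3)*K^6
            + (5632/3)*K^7 + 1280*K^8 + (1024/3)*K^9)
          / (8*K^2 + 144*K^3 + 1160*K^4 + 5504*K^5 + 17024*K^6 + 35840*K^7 + 51968*K^8
            + 51200*K^9 + 32768*K^10 + 12288*K^11 + 2048*K^12) := by
      have hd : (8*K^2 + 144*K^3 + 1160*K^4 + 5504*K^5 + 17024*K^6 + 35840*K^7 + 51968*K^8
          + 51200*K^9 + 32768*K^10 + 12288*K^11 + 2048*K^12) ≠ 0 := by positivity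
      field_simp
      ring
    rw [comb]
    apply div_nonneg _ (by positivity)
    nlinarith [pow_nonneg hK1 2, pow_nonneg hK1 3, pow_nonneg hK1 4, pow_nonneg hK1 5,
      pow_nonneg hK1 6, pow_nonneg hK1 7, pow_nonneg hK1 8, pow_nonneg hK1 9]
  linarith

lemma tendsto_aux : Tendsto (fun k : ℕ => (harmonic (k+1) : ℝ) - Real.log ((k:ℝ)+1))
    atTop (𝓝 Real.eulerMascheroniConstant) := by
  have h := Real.tendsto_eulerMascheroniSeq'.comp (tendsto_add_atTop_nat 1)
  apply h.congr
  intro k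
  simp only [Function.comp, Real.eulerMascheroniSeq']
  rw [if_neg (Nat.succ_ne_zero k)]
  push_cast
  ring_nf

lemma tendsto_inv_shift (c : ℝ) : Tendsto (fun k : ℕ => 1/(2*((k:ℝ)+c))) atTop (𝓝 0) := by
  have h : Tendsto (fun x : ℝ => 2*(x+c)) atTop atTop :=
    (tendsto_atTop_add_const_right atTop c tendsto_id).const_mul_atTop two_pos
  have h2 := tendsto_inv_atTop_zero.comp (h.comp tendsto_natCast_atTop_atTop)
  apply h2.congr
  intro k
  simp [Function.comp, one_div, mul_inv]

lemma gamma_le (k : ℕ) : Real.eulerMascheroniConstant ≤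
    (harmonic (k+1) : ℝ) - Real.log ((k:ℝ)+1) - 1/(2*((k:ℝ)+2)) := by
  have hA : Antitone (fun k : ℕ => (harmonic (k+1) : ℝ) - Real.log ((k:ℝ)+1) - 1/(2*((k:ℝ)+2))) := by
    apply antitone_nat_of_succ_le
    intro k
    have hstep := log_step_lb (K := (k:ℝ)+1) (by linarith [Nat.cast_nonneg (α := ℝ) k])
    have hh : (harmonic (k+1+1) : ℝ) = (harmonic (k+1) : ℝ) + 1/((k:ℝ)+2) := by
      rw [harmonic_succ]
      push_cast
      ring
    push_cast
    rw [hh]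
    have e : (k:ℝ)+1+1 = (k:ℝ)+2 := by ring
    rw [e] at hstep ⊢
    linarith
  have hT : Tendsto (fun k : ℕ => (harmonic (k+1) : ℝ) - Real.log ((k:ℝ)+1) - 1/(2*((k:ℝ)+2)))
      atTop (𝓝 Real.eulerMascheroniConstant) := by
    simpa using tendsto_aux.sub (tendsto_inv_shift 2)
  exact hA.le_of_tendsto hT k

lemma le_gamma (k : ℕ) :
    (harmonic (k+1) : ℝ) - Real.log ((k:ℝ)+1) - 1/(2*((k:ℝ)+1)) ≤
      Real.eulerMascheroniConstant := by
  have hB : Monotone (fun k : ℕ => (harmonic (k+1) : ℝ) - Real.log ((k:ℝ)+1) - 1/(2*((k:ℝ)+1))) := by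
    apply monotone_nat_of_le_succ
    intro k
    have hstep := log_step_ub (K := (k:ℝ)+1) (by linarith [Nat.cast_nonneg (α := ℝ) k])
    have hh : (harmonic (k+1+1) : ℝ) = (harmonic (k+1) : ℝ) + 1/((k:ℝ)+2) := by
      rw [harmonic_succ]
      push_cast
      ring
    push_cast
    rw [hh]
    have e : (k:ℝ)+1+1 = (k:ℝ)+2 := by ring
    rw [e] at hstep ⊢
    linarith
  have hT : Tendsto (fun k : ℕ => (harmonic (k+1) : ℝ) - Real.log ((k:ℝ)+1) - 1/(2*((k:ℝ)+1)))
      atTop (𝓝 Real.eulerMascheroniConstant) := by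
    simpa using tendsto_aux.sub (tendsto_inv_shift 1)
  exact hB.ge_of_tendsto hT k


lemma tSeq_eq (k : ℕ) : tSeq k = (harmonic (k+1) : ℝ) - 1 := by
  induction k with
  | zero => simp [tSeq, harmonic_succ, harmonic_zero]
  | succ k ih =>
    have hh : (harmonic (k+1+1) : ℝ) = (harmonic (k+1) : ℝ) + 1/((k:ℝ)+2) := by
      rw [harmonic_succ]
      push_cast
      ring
    rw [tSeq, Finset.sum_range_succ, ← tSeq, ih, hh]
    push_cast
    ring

lemma bddAbove_tSet (x : ℝ) : BddAbove {k : ℕ | tSeq k ≤ x} := by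
  use ⌈Real.exp (x+1)⌉₊
  intro k hk
  simp only [Set.mem_setOf_eq] at hk
  rw [tSeq_eq] at hk
  have hlog := log_add_one_le_harmonic (k+1)
  push_cast at hlog
  have h1 : Real.log ((k:ℝ)+1+1) ≤ x + 1 := by linarith
  have h2 : ((k:ℝ)+1+1) ≤ Real.exp (x+1) := by
    rw [← Real.exp_log (show (0:ℝ) < (k:ℝ)+1+1 by positivity)]
    exact Real.exp_le_exp.2 h1
  have h3 : (k:ℝ) ≤ Real.exp (x+1) := by linarith
  exact_mod_cast h3.trans (Nat.le_ceil _)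

lemma lt_tSeq_succ (x : ℝ) : x < tSeq (mFun x + 1) := by
  by_contra h
  push_neg at h
  have h2 : mFun x + 1 ≤ mFun x := le_csSup (bddAbove_tSet x) h
  omega

/-- **(Display (4.2).)** For every `n ≥ 1` and every `s ∈ [0, t_n]`,
`log(n+1) + 1/(2(n+2)) − (s+1) ≤ t_n − s − γ
  ≤ log(m(t_n − s) + 2) − 1 + 1/(2(m(t_n − s) + 1))`. -/
theorem tSeq_sub_gamma_bounds (n : ℕ) (hn : 1 ≤ n) (s : ℝ)
    (hs : s ∈ Set.Icc 0 (tSeq n)) :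
    Real.log ((n : ℝ) + 1) + 1 / (2 * ((n : ℝ) + 2)) - (s + 1) ≤
        tSeq n - s - Real.eulerMascheroniConstant ∧
      tSeq n - s - Real.eulerMascheroniConstant ≤
        Real.log ((mFun (tSeq n - s) : ℝ) + 2) - 1 +
          1 / (2 * ((mFun (tSeq n - s) : ℝ) + 1)) := by
  obtain ⟨hs0, hs1⟩ := hs
  constructor
  · have h := gamma_le n
    rw [tSeq_eq]
    linarith
  · set m := mFun (tSeq n - s) with hm
    have hx : tSeq n - s < tSeq (m+1) := lt_tSeq_succ _
    rw [tSeq_eq (m+1)] at hx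
    have h2 := le_gamma (m+1)
    push_cast at h2 hx
    have e : (m:ℝ)+1+1 = (m:ℝ)+2 := by ring
    rw [e] at h2
    have h3 : 1/(2*((m:ℝ)+2)) ≤ 1/(2*((m:ℝ)+1)) := by
      apply one_div_le_one_div_of_le (by positivity)
      linarith
    have hidx : harmonic (m+1+1) = harmonic (m+2) := by norm_num
    rw [hidx] at hx h2
    linarith

end
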